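/- Let X and Y be Hermitian d×d matrices and 0 ≤ δ ≤ 1 such that ‖X‖_{S1} + ‖Y‖_{S1} ≤ 1 + δ, ‖X − Y‖_{S1} ≥ 1 − δ, Tr(X⁻) ≤ δ, and Tr(Y⁻) ≤ δ, where X = X⁺ − X⁻ is the decomposition of X into positive and negative parts (and similarly for Y). Let P be the orthogonal projection onto the nonnegative eigenspace of X − Y and Q = Id − P. Then Tr(PX) ≥ ‖X‖_{S1} − 4δ and Tr(QY) ≥ ‖Y‖_{S1} − 4δ. -/

import Mathlib

open Matrix ComplexOrder
set_option maxHeartbeats 1000000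

/-- The Frobenius norm of a complex square matrix: `(Tr(AᴴA))^{1/2}`. -/
noncomputable def frobNorm {d : ℕ} (A : Matrix (Fin d) (Fin d) ℂ) : ℝ :=
  Real.sqrt ((Aᴴ * A).trace.re)

/-- The Schatten-1 (nuclear) norm: the sum of singular values, i.e. `Tr((AᴴA)^{1/2})`. -/
noncomputable def nucNorm {d : ℕ} (A : Matrix (Fin d) (Fin d) ℂ) : ℝ :=
  (((Matrix.posSemidef_conjTranspose_mul_self A).1.eigenvectorUnitary : Matrix (Fin d) (Fin d) ℂ) *
    Matrix.diagonal (fun i => ((Real.sqrt ((Matrix.posSemidef_conjTranspose_mul_self A).1.eigenvalues i) : ℝ) : ℂ)) *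
    (star (Matrix.posSemidef_conjTranspose_mul_self A).1.eigenvectorUnitary :
      Matrix (Fin d) (Fin d) ℂ)).trace.re


/-- The positive part `X⁺` of a Hermitian matrix, via the spectral decomposition. -/
noncomputable def posPart {d : ℕ} {X : Matrix (Fin d) (Fin d) ℂ} (hX : X.IsHermitian) :
    Matrix (Fin d) (Fin d) ℂ :=
  (hX.eigenvectorUnitary : Matrix (Fin d) (Fin d) ℂ) *
    Matrix.diagonal (fun i => ((max (hX.eigenvalues i) 0 : ℝ) : ℂ)) *
    (hX.eigenvectorUnitary : Matrix (Fin d) (Fin d) ℂ)ᴴ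

/-- The negative part `X⁻` of a Hermitian matrix, via the spectral decomposition,
so that `X = X⁺ - X⁻`. -/
noncomputable def negPart {d : ℕ} {X : Matrix (Fin d) (Fin d) ℂ} (hX : X.IsHermitian) :
    Matrix (Fin d) (Fin d) ℂ :=
  (hX.eigenvectorUnitary : Matrix (Fin d) (Fin d) ℂ) *
    Matrix.diagonal (fun i => ((max (-hX.eigenvalues i) 0 : ℝ) : ℂ)) *
    (hX.eigenvectorUnitary : Matrix (Fin d) (Fin d) ℂ)ᴴ

/-- The orthogonal projection onto the direct sum of eigenspaces of a Hermitian matrix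
with nonnegative eigenvalues. -/
noncomputable def nonnegProj {d : ℕ} {H : Matrix (Fin d) (Fin d) ℂ} (hH : H.IsHermitian) :
    Matrix (Fin d) (Fin d) ℂ :=
  (hH.eigenvectorUnitary : Matrix (Fin d) (Fin d) ℂ) *
    Matrix.diagonal (fun i => if 0 ≤ hH.eigenvalues i then (1 : ℂ) else 0) *
    (hH.eigenvectorUnitary : Matrix (Fin d) (Fin d) ℂ)ᴴ

variable {d : ℕ}

lemma conjTranspose_mul_self_of_unitary {U : Matrix (Fin d) (Fin d) ℂ}
    (hU : U ∈ Matrix.unitaryGroup (Fin d) ℂ) : Uᴴ * U = 1 := by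
  rw [← Matrix.star_eq_conjTranspose]
  exact mem_unitaryGroup_iff'.mp hU

lemma self_mul_conjTranspose_of_unitary {U : Matrix (Fin d) (Fin d) ℂ}
    (hU : U ∈ Matrix.unitaryGroup (Fin d) ℂ) : U * Uᴴ = 1 := by
  rw [← Matrix.star_eq_conjTranspose]
  exact mem_unitaryGroup_iff.mp hU

lemma trace_conj_diag {U : Matrix (Fin d) (Fin d) ℂ}
    (hU : U ∈ Matrix.unitaryGroup (Fin d) ℂ) (f : Fin d → ℂ) :
    (U * Matrix.diagonal f * Uᴴ).trace = ∑ i, f i := by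
  rw [Matrix.trace_mul_cycle, conjTranspose_mul_self_of_unitary hU,
    Matrix.one_mul, Matrix.trace_diagonal]

lemma conj_diag_mul {U : Matrix (Fin d) (Fin d) ℂ}
    (hU : U ∈ Matrix.unitaryGroup (Fin d) ℂ) (f g : Fin d → ℂ) :
    (U * Matrix.diagonal f * Uᴴ) * (U * Matrix.diagonal g * Uᴴ)
      = U * Matrix.diagonal (f * g) * Uᴴ := by
  have : Uᴴ * (U * Matrix.diagonal g * Uᴴ) = Matrix.diagonal g * Uᴴ := by
    rw [← Matrix.mul_assoc, ← Matrix.mul_assoc, conjTranspose_mul_self_of_unitary hU,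
      Matrix.one_mul]
  rw [Matrix.mul_assoc, this, ← Matrix.mul_assoc, Matrix.mul_assoc _ _ (Matrix.diagonal g),
    Matrix.diagonal_mul_diagonal]
  rfl

lemma posSemidef_trace_re_nonneg {A : Matrix (Fin d) (Fin d) ℂ} (hA : A.PosSemidef) :
    0 ≤ A.trace.re := by
  have h : ∀ i, 0 ≤ (A i i).re := by
    intro i
    have := hA.dotProduct_mulVec_nonneg (Pi.single i 1)
    have h2 : star (Pi.single i 1 : Fin d → ℂ) ⬝ᵥ (A *ᵥ Pi.single i 1) = A i i := by
      simp [Matrix.mulVec_single, dotProduct, Pi.single_apply]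
    rw [h2] at this
    exact (Complex.le_def.mp this).1
  rw [Matrix.trace, Complex.re_sum]
  exact Finset.sum_nonneg fun i _ => h i

open MatrixOrder in
lemma trace_mul_re_nonneg {A B : Matrix (Fin d) (Fin d) ℂ}
    (hA : A.PosSemidef) (hB : B.PosSemidef) : 0 ≤ (A * B).trace.re := by
  have h1 : A * B = CFC.sqrt A * (CFC.sqrt A * B) := by
    rw [← Matrix.mul_assoc, CFC.sqrt_mul_sqrt_self A hA.nonneg]
  rw [h1, Matrix.trace_mul_comm, Matrix.mul_assoc]
  have h2 : (CFC.sqrt A * B * CFC.sqrt A).PosSemidef := by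
    have := hB.mul_mul_conjTranspose_same (CFC.sqrt A)
    rwa [(CFC.sqrt_nonneg A).posSemidef.1.eq] at this
  rw [← Matrix.mul_assoc]
  exact posSemidef_trace_re_nonneg h2

lemma spectral' {X : Matrix (Fin d) (Fin d) ℂ} (hX : X.IsHermitian) :
    X = (hX.eigenvectorUnitary : Matrix (Fin d) (Fin d) ℂ) *
      Matrix.diagonal (fun i => (hX.eigenvalues i : ℂ)) *
      (hX.eigenvectorUnitary : Matrix (Fin d) (Fin d) ℂ)ᴴ := by
  conv_lhs => rw [hX.spectral_theorem]
  rfl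

open MatrixOrder in
lemma nucNorm_hermitian {X : Matrix (Fin d) (Fin d) ℂ} (hX : X.IsHermitian) :
    nucNorm X = ∑ i, |hX.eigenvalues i| := by
  set U := (hX.eigenvectorUnitary : Matrix (Fin d) (Fin d) ℂ) with hUdef
  have hU := hX.eigenvectorUnitary.2
  set S := U * Matrix.diagonal (fun i => ((|hX.eigenvalues i| : ℝ) : ℂ)) * Uᴴ with hSdef
  have hS : S.PosSemidef := by
    refine (Matrix.PosSemidef.diagonal ?_).mul_mul_conjTranspose_same U
    intro i
    simp only [Pi.zero_apply]
    exact_mod_cast Complex.zero_le_real.mpr (abs_nonneg _)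
  have hsq : S ^ 2 = Xᴴ * X := by
    rw [hX.eq, pow_two, hSdef, conj_diag_mul hU]
    conv_rhs => rw [spectral' hX, conj_diag_mul hU]
    have heq : ((fun i => ((|hX.eigenvalues i| : ℝ) : ℂ)) * fun i => ((|hX.eigenvalues i| : ℝ) : ℂ))
        = ((fun i => ((hX.eigenvalues i : ℝ) : ℂ)) * fun i => ((hX.eigenvalues i : ℝ) : ℂ)) := by
      funext i
      simp only [Pi.mul_apply]
      rw [← Complex.ofReal_mul, ← Complex.ofReal_mul, abs_mul_abs_self]
    rw [heq]
  have hP := Matrix.posSemidef_conjTranspose_mul_self X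
  have key : S = (hP.1.eigenvectorUnitary : Matrix (Fin d) (Fin d) ℂ) *
      Matrix.diagonal (fun i => ((Real.sqrt (hP.1.eigenvalues i) : ℝ) : ℂ)) *
      (hP.1.eigenvectorUnitary : Matrix (Fin d) (Fin d) ℂ)ᴴ := by
    have hV := hP.1.eigenvectorUnitary.2
    have hT : ((hP.1.eigenvectorUnitary : Matrix (Fin d) (Fin d) ℂ) *
        Matrix.diagonal (fun i => ((Real.sqrt (hP.1.eigenvalues i) : ℝ) : ℂ)) *
        (hP.1.eigenvectorUnitary : Matrix (Fin d) (Fin d) ℂ)ᴴ).PosSemidef := by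
      refine (Matrix.PosSemidef.diagonal ?_).mul_mul_conjTranspose_same _
      intro i
      exact Complex.zero_le_real.mpr (Real.sqrt_nonneg _)
    have hTT : ((hP.1.eigenvectorUnitary : Matrix (Fin d) (Fin d) ℂ) *
        Matrix.diagonal (fun i => ((Real.sqrt (hP.1.eigenvalues i) : ℝ) : ℂ)) *
        (hP.1.eigenvectorUnitary : Matrix (Fin d) (Fin d) ℂ)ᴴ) *
        ((hP.1.eigenvectorUnitary : Matrix (Fin d) (Fin d) ℂ) *
        Matrix.diagonal (fun i => ((Real.sqrt (hP.1.eigenvalues i) : ℝ) : ℂ)) *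
        (hP.1.eigenvectorUnitary : Matrix (Fin d) (Fin d) ℂ)ᴴ) = Xᴴ * X := by
      rw [conj_diag_mul hV]
      conv_rhs => rw [spectral' hP.1]
      have heq : ((fun i => ((Real.sqrt (hP.1.eigenvalues i) : ℝ) : ℂ)) *
          fun i => ((Real.sqrt (hP.1.eigenvalues i) : ℝ) : ℂ))
          = fun i => ((hP.1.eigenvalues i : ℝ) : ℂ) := by
        funext i
        simp only [Pi.mul_apply]
        rw [← Complex.ofReal_mul, Real.mul_self_sqrt (hP.eigenvalues_nonneg i)]
      rw [heq]
    have hSS : S * S = Xᴴ * X := by rw [← pow_two]; exact hsq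
    rw [← CFC.sqrt_unique hSS hS.nonneg, CFC.sqrt_unique hTT hT.nonneg]
  have hn : nucNorm X = S.trace.re := by rw [key]; rfl
  rw [hn, hSdef, trace_conj_diag hU, Complex.re_sum]
  norm_num

lemma conj_diag_sub {U : Matrix (Fin d) (Fin d) ℂ} (f g : Fin d → ℂ) :
    U * Matrix.diagonal f * Uᴴ - U * Matrix.diagonal g * Uᴴ
      = U * Matrix.diagonal (f - g) * Uᴴ := by
  have h : Matrix.diagonal (f - g) = Matrix.diagonal (fun i => f i - g i) := rfl
  rw [h, ← Matrix.diagonal_sub, Matrix.mul_sub, Matrix.sub_mul]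

lemma one_eq_conj {U : Matrix (Fin d) (Fin d) ℂ}
    (hU : U ∈ Matrix.unitaryGroup (Fin d) ℂ) :
    (1 : Matrix (Fin d) (Fin d) ℂ) = U * Matrix.diagonal (fun _ => 1) * Uᴴ := by
  rw [Matrix.diagonal_one, Matrix.mul_one, self_mul_conjTranspose_of_unitary hU]

lemma trace_re_eq_sum {X : Matrix (Fin d) (Fin d) ℂ} (hX : X.IsHermitian) :
    X.trace.re = ∑ i, hX.eigenvalues i := by
  conv_lhs => rw [spectral' hX]
  rw [trace_conj_diag hX.eigenvectorUnitary.2, Complex.re_sum]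
  norm_num

lemma negPart_trace_re {X : Matrix (Fin d) (Fin d) ℂ} (hX : X.IsHermitian) :
    (_root_.negPart hX).trace.re = ∑ i, max (-hX.eigenvalues i) 0 := by
  rw [_root_.negPart, trace_conj_diag hX.eigenvectorUnitary.2, Complex.re_sum]
  norm_num

lemma posPart_sub_negPart' {X : Matrix (Fin d) (Fin d) ℂ} (hX : X.IsHermitian) :
    _root_.posPart hX - _root_.negPart hX = X := by
  rw [_root_.posPart, _root_.negPart, conj_diag_sub]
  conv_rhs => rw [spectral' hX]
  have heq : ((fun i => ((max (hX.eigenvalues i) 0 : ℝ) : ℂ))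
        - fun i => ((max (-hX.eigenvalues i) 0 : ℝ) : ℂ))
      = fun i => ((hX.eigenvalues i : ℝ) : ℂ) := by
    funext i
    simp only [Pi.sub_apply]
    rw [← Complex.ofReal_sub, max_zero_sub_max_neg_zero_eq_self]
  rw [heq]

lemma posPart_posSemidef' {X : Matrix (Fin d) (Fin d) ℂ} (hX : X.IsHermitian) :
    (_root_.posPart hX).PosSemidef := by
  rw [_root_.posPart]
  refine (Matrix.PosSemidef.diagonal ?_).mul_mul_conjTranspose_same _
  intro i
  exact Complex.zero_le_real.mpr (le_max_right _ _)

lemma negPart_posSemidef' {X : Matrix (Fin d) (Fin d) ℂ} (hX : X.IsHermitian) :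
    (_root_.negPart hX).PosSemidef := by
  rw [_root_.negPart]
  refine (Matrix.PosSemidef.diagonal ?_).mul_mul_conjTranspose_same _
  intro i
  exact Complex.zero_le_real.mpr (le_max_right _ _)

lemma nonnegProj_posSemidef {H : Matrix (Fin d) (Fin d) ℂ} (hH : H.IsHermitian) :
    (nonnegProj hH).PosSemidef := by
  refine (Matrix.PosSemidef.diagonal ?_).mul_mul_conjTranspose_same _
  intro i
  by_cases h : 0 ≤ hH.eigenvalues i <;> simp [h]

lemma one_sub_nonnegProj_posSemidef {H : Matrix (Fin d) (Fin d) ℂ} (hH : H.IsHermitian) :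
    ((1 : Matrix (Fin d) (Fin d) ℂ) - nonnegProj hH).PosSemidef := by
  rw [nonnegProj, one_eq_conj hH.eigenvectorUnitary.2, conj_diag_sub]
  refine (Matrix.PosSemidef.diagonal ?_).mul_mul_conjTranspose_same _
  intro i
  simp only [Pi.sub_apply]
  by_cases h : 0 ≤ hH.eigenvalues i <;> simp [h]

lemma conj_diag_mul_hermitian {H : Matrix (Fin d) (Fin d) ℂ} (hH : H.IsHermitian)
    (f : Fin d → ℂ) :
    ((hH.eigenvectorUnitary : Matrix (Fin d) (Fin d) ℂ) * Matrix.diagonal f *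
      (hH.eigenvectorUnitary : Matrix (Fin d) (Fin d) ℂ)ᴴ) * H
    = (hH.eigenvectorUnitary : Matrix (Fin d) (Fin d) ℂ) *
        Matrix.diagonal (fun i => f i * (hH.eigenvalues i : ℂ)) *
        (hH.eigenvectorUnitary : Matrix (Fin d) (Fin d) ℂ)ᴴ := by
  set U := (hH.eigenvectorUnitary : Matrix (Fin d) (Fin d) ℂ) with hUdef
  have hU := hH.eigenvectorUnitary.2
  have h0 : Uᴴ * H * U = Matrix.diagonal (fun i => (hH.eigenvalues i : ℂ)) := by
    conv_lhs => rw [spectral' hH]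
    rw [← hUdef]
    simp only [Matrix.mul_assoc, conjTranspose_mul_self_of_unitary hU, Matrix.mul_one]
    rw [← Matrix.mul_assoc, conjTranspose_mul_self_of_unitary hU, Matrix.one_mul,
      Matrix.mul_one]
  have h1 : Uᴴ * H = Matrix.diagonal (fun i => (hH.eigenvalues i : ℂ)) * Uᴴ := by
    calc Uᴴ * H = (Uᴴ * H * U) * Uᴴ := by
          rw [Matrix.mul_assoc (Uᴴ * H), self_mul_conjTranspose_of_unitary hU, Matrix.mul_one]
      _ = Matrix.diagonal (fun i => (hH.eigenvalues i : ℂ)) * Uᴴ := by rw [h0]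
  rw [Matrix.mul_assoc, h1, ← Matrix.mul_assoc, Matrix.mul_assoc U,
    Matrix.diagonal_mul_diagonal]

lemma real_aux1 (t : ℝ) : max t 0 = (|t| + t) / 2 := by
  rcases le_total 0 t with h | h
  · rw [max_eq_left h, abs_of_nonneg h]; ring
  · rw [max_eq_right h, abs_of_nonpos h]; ring

lemma real_aux2 (t : ℝ) : t = |t| - 2 * max (-t) 0 := by
  rcases le_total 0 t with h | h
  · rw [abs_of_nonneg h, max_eq_right (by linarith)]; ring
  · rw [abs_of_nonpos h, max_eq_left (by linarith)]; ring

lemma trace_re_eq' {X : Matrix (Fin d) (Fin d) ℂ} (hX : X.IsHermitian) :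
    X.trace.re = nucNorm X - 2 * (_root_.negPart hX).trace.re := by
  rw [trace_re_eq_sum hX, nucNorm_hermitian hX, negPart_trace_re hX, Finset.mul_sum,
    ← Finset.sum_sub_distrib]
  exact Finset.sum_congr rfl fun i _ => real_aux2 _

lemma trace_mul_split {d : ℕ} (M : Matrix (Fin d) (Fin d) ℂ) {X : Matrix (Fin d) (Fin d) ℂ}
    (hX : X.IsHermitian) :
    (M * X).trace.re = (M * _root_.posPart hX).trace.re - (M * _root_.negPart hX).trace.re := by
  conv_lhs => rw [← posPart_sub_negPart' hX]
  rw [Matrix.mul_sub, Matrix.trace_sub, Complex.sub_re]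

/-- Lemma: if Hermitian `X, Y` satisfy `‖X‖₁ + ‖Y‖₁ ≤ 1 + δ`, `‖X - Y‖₁ ≥ 1 - δ`,
`Tr(X⁻) ≤ δ` and `Tr(Y⁻) ≤ δ`, and `P` is the projection onto the nonnegative
eigenspace of `X - Y` with `Q = Id - P`, then `Tr(PX) ≥ ‖X‖₁ - 4δ` and
`Tr(QY) ≥ ‖Y‖₁ - 4δ`. -/
theorem trace_proj_ge {d : ℕ} (X Y : Matrix (Fin d) (Fin d) ℂ)
    (hX : X.IsHermitian) (hY : Y.IsHermitian) (δ : ℝ) (hδ0 : 0 ≤ δ) (hδ1 : δ ≤ 1)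
    (hsum : nucNorm X + nucNorm Y ≤ 1 + δ)
    (hdiff : 1 - δ ≤ nucNorm (X - Y))
    (hXneg : (negPart hX).trace.re ≤ δ)
    (hYneg : (negPart hY).trace.re ≤ δ) :
    nucNorm X - 4 * δ ≤ ((nonnegProj (hX.sub hY)) * X).trace.re ∧
    nucNorm Y - 4 * δ ≤ (((1 : Matrix (Fin d) (Fin d) ℂ) - nonnegProj (hX.sub hY)) * Y).trace.re := by
  have hU := (hX.sub hY).eigenvectorUnitary.2
  -- trace of P(X-Y)
  have tPD : (nonnegProj (hX.sub hY) * (X - Y)).trace.re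
      = ∑ i, max ((hX.sub hY).eigenvalues i) 0 := by
    conv_lhs => rw [nonnegProj]
    rw [conj_diag_mul_hermitian (hX.sub hY), trace_conj_diag hU, Complex.re_sum]
    refine Finset.sum_congr rfl fun i _ => ?_
    by_cases h : 0 ≤ (hX.sub hY).eigenvalues i
    · simp [h, max_eq_left h]
    · simp [h, max_eq_right (le_of_not_ge h)]
  have keyD : ∑ i, max ((hX.sub hY).eigenvalues i) 0
      = (nucNorm (X - Y) + (X - Y).trace.re) / 2 := by
    rw [nucNorm_hermitian (hX.sub hY), trace_re_eq_sum (hX.sub hY),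
      ← Finset.sum_add_distrib, Finset.sum_div]
    exact Finset.sum_congr rfl fun i _ => real_aux1 _
  -- trace relations
  have hTX := trace_re_eq' hX
  have hTY := trace_re_eq' hY
  have hTDsub : (X - Y).trace.re = X.trace.re - Y.trace.re := by
    rw [Matrix.trace_sub, Complex.sub_re]
  have haX : 0 ≤ (negPart hX).trace.re :=
    posSemidef_trace_re_nonneg (negPart_posSemidef' hX)
  have haY : 0 ≤ (negPart hY).trace.re :=
    posSemidef_trace_re_nonneg (negPart_posSemidef' hY)
  -- positivity of various traces
  have h1 : 0 ≤ (nonnegProj (hX.sub hY) * _root_.posPart hY).trace.re :=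
    trace_mul_re_nonneg (nonnegProj_posSemidef _) (posPart_posSemidef' hY)
  have h2 : 0 ≤ ((1 - nonnegProj (hX.sub hY)) * _root_.negPart hY).trace.re :=
    trace_mul_re_nonneg (one_sub_nonnegProj_posSemidef _) (negPart_posSemidef' hY)
  have h3 : 0 ≤ ((1 - nonnegProj (hX.sub hY)) * _root_.posPart hX).trace.re :=
    trace_mul_re_nonneg (one_sub_nonnegProj_posSemidef _) (posPart_posSemidef' hX)
  have h4 : 0 ≤ (nonnegProj (hX.sub hY) * _root_.negPart hX).trace.re :=
    trace_mul_re_nonneg (nonnegProj_posSemidef _) (negPart_posSemidef' hX)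
  -- expansions
  have e1 : (nonnegProj (hX.sub hY) * X).trace.re
      = (nonnegProj (hX.sub hY) * (X - Y)).trace.re
        + (nonnegProj (hX.sub hY) * Y).trace.re := by
    rw [← Complex.add_re, ← Matrix.trace_add, ← Matrix.mul_add, sub_add_cancel]
  have e2 : (nonnegProj (hX.sub hY) * Y).trace.re
      = (nonnegProj (hX.sub hY) * _root_.posPart hY).trace.re
        - (nonnegProj (hX.sub hY) * _root_.negPart hY).trace.re :=
    trace_mul_split _ hY
  have e3 : ((1 - nonnegProj (hX.sub hY)) * _root_.negPart hY).trace.re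
      = (negPart hY).trace.re - (nonnegProj (hX.sub hY) * _root_.negPart hY).trace.re := by
    rw [Matrix.sub_mul, Matrix.one_mul, Matrix.trace_sub, Complex.sub_re]
  have f1 : ((1 - nonnegProj (hX.sub hY)) * Y).trace.re
      = ((1 - nonnegProj (hX.sub hY)) * X).trace.re
        - ((1 - nonnegProj (hX.sub hY)) * (X - Y)).trace.re := by
    rw [← Complex.sub_re, ← Matrix.trace_sub, ← Matrix.mul_sub, sub_sub_cancel]
  have f2 : ((1 - nonnegProj (hX.sub hY)) * (X - Y)).trace.re
      = (X - Y).trace.re - (nonnegProj (hX.sub hY) * (X - Y)).trace.re := by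
    rw [Matrix.sub_mul, Matrix.one_mul, Matrix.trace_sub, Complex.sub_re]
  have f3 : ((1 - nonnegProj (hX.sub hY)) * X).trace.re
      = ((1 - nonnegProj (hX.sub hY)) * _root_.posPart hX).trace.re
        - ((1 - nonnegProj (hX.sub hY)) * _root_.negPart hX).trace.re :=
    trace_mul_split _ hX
  have f4 : ((1 - nonnegProj (hX.sub hY)) * _root_.negPart hX).trace.re
      = (negPart hX).trace.re - (nonnegProj (hX.sub hY) * _root_.negPart hX).trace.re := by
    rw [Matrix.sub_mul, Matrix.one_mul, Matrix.trace_sub, Complex.sub_re]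
  constructor
  · linarith
  · linarith
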